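/- Let θ be a ternary relation on ℕ, X ⊆ ℕ a finite set, n, s, k₁, …, k_s ∈ ℕ and a ≤ min X. If X is ω^{n+1}·(a, a·k₁, …, a·k_s)-large*(θ) and exp-sparse, then for every coloring f : X → {0,…,a−1} there is an f-homogeneous ω^n·(k₁, …, k_s)-large*(θ) subset of X (f-homogeneous means f is constant on the subset). -/

import Mathlib

/-- The minimum of a finite set of naturals (`0` if empty). -/
noncomputable def minN (X : Finset ℕ) : ℕ := sInf (X : Set ℕ)

/-- The maximum of a finite set of naturals (`0` if empty). -/
def maxN (X : Finset ℕ) : ℕ := X.sup id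

/-- `E` lies entirely below `F`. -/
def SetBelow (E F : Finset ℕ) : Prop := ∀ x ∈ E, ∀ y ∈ F, x < y

/-- `E` and `F` are `θ`-apart: for every `x < max E` there is `y < min F`
with `θ x y z` for all `z < max F`. -/
def ThetaApart (θ : ℕ → ℕ → ℕ → Prop) (E F : Finset ℕ) : Prop :=
  ∀ x < maxN E, ∃ y < minN F, ∀ z < maxN F, θ x y z

/-- `L·k`: finite sets containing `k` pairwise `θ`-apart members `X₀ < ⋯ < X_{k-1}` of `L`. -/
def MulK (θ : ℕ → ℕ → ℕ → Prop) (L : Set (Finset ℕ)) (k : ℕ) : Set (Finset ℕ) :=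
  {F | ∃ X : Fin k → Finset ℕ, (∀ i, X i ∈ L) ∧ (∀ i, X i ⊆ F) ∧
    ∀ i j, i < j → SetBelow (X i) (X j) ∧ ThetaApart θ (X i) (X j)}

/-- `L·σ` for a finite sequence `σ`: `L·ε = L`, `L·(k⌢τ) = (L·k)·τ`. -/
def MulSeq (θ : ℕ → ℕ → ℕ → Prop) (L : Set (Finset ℕ)) : List ℕ → Set (Finset ℕ)
  | [] => L
  | k :: τ => MulSeq θ (MulK θ L k) τ

/-- `L^θ_n`: the `ω^n`-large*(θ) finite sets. -/
noncomputable def LargeStar (θ : ℕ → ℕ → ℕ → Prop) : ℕ → Set (Finset ℕ)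
  | 0 => {X | X.Nonempty}
  | n + 1 => {X | X.Nonempty ∧
      X.erase (minN X) ∈ MulSeq θ (LargeStar θ n) (List.replicate (n + 1) (minN X))}

/-- `ω^n`-largeness(θ) (the non-starred notion). -/
noncomputable def LargeTheta (θ : ℕ → ℕ → ℕ → Prop) : ℕ → Set (Finset ℕ)
  | 0 => {X | X.Nonempty}
  | n + 1 => {X | X.Nonempty ∧ X.erase (minN X) ∈ MulK θ (LargeTheta θ n) (minN X)}

/-- `L·k` without θ-apartness (plain largeness product). -/
def MulKPlain (L : Set (Finset ℕ)) (k : ℕ) : Set (Finset ℕ) :=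
  {F | ∃ X : Fin k → Finset ℕ, (∀ i, X i ∈ L) ∧ (∀ i, X i ⊆ F) ∧
    ∀ i j, i < j → SetBelow (X i) (X j)}

/-- Ketonen–Solovay `ω^n`-largeness (no θ). -/
noncomputable def LargePlain : ℕ → Set (Finset ℕ)
  | 0 => {X | X.Nonempty}
  | n + 1 => {X | X.Nonempty ∧ X.erase (minN X) ∈ MulKPlain (LargePlain n) (minN X)}

/-- `g`-sparsity. -/
def GSparse (g : ℕ → ℕ) (X : Finset ℕ) : Prop := ∀ x ∈ X, ∀ y ∈ X, x < y → g x < y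

/-- exp-sparsity. -/
def ExpSparse (X : Finset ℕ) : Prop := ∀ x ∈ X, ∀ y ∈ X, x < y → 4 ^ x < y

/-- `ω^k`-sparsity. -/
def OmegaSparse (k : ℕ) (X : Finset ℕ) : Prop :=
  ∀ x ∈ X, ∀ y ∈ X, x < y → Finset.Ioc x y ∈ LargePlain k

section Aux

variable {θ : ℕ → ℕ → ℕ → Prop}

lemma minN_le {X : Finset ℕ} {x : ℕ} (hx : x ∈ X) : minN X ≤ x :=
  Nat.sInf_le (by simpa using hx)

lemma minN_mem {X : Finset ℕ} (hX : X.Nonempty) : minN X ∈ X := by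
  have := Nat.sInf_mem (s := (X : Set ℕ)) (by simpa using hX)
  simpa [minN] using this

lemma le_maxN {X : Finset ℕ} {x : ℕ} (hx : x ∈ X) : x ≤ maxN X :=
  Finset.le_sup (f := id) hx

lemma maxN_mem {X : Finset ℕ} (hX : X.Nonempty) : maxN X ∈ X := by
  obtain ⟨a, ha, he⟩ := Finset.exists_mem_eq_sup X hX id
  rw [maxN, he]; exact ha

lemma minN_mono {X Y : Finset ℕ} (h : Y ⊆ X) (hY : Y.Nonempty) : minN X ≤ minN Y :=
  minN_le (h (minN_mem hY))

lemma maxN_mono {X Y : Finset ℕ} (h : Y ⊆ X) : maxN Y ≤ maxN X :=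
  Finset.sup_mono h

lemma nonempty_of_three_le_minN {X : Finset ℕ} (h : 3 ≤ minN X) : X.Nonempty := by
  rcases Finset.eq_empty_or_nonempty X with rfl | hne
  · simp [minN] at h
  · exact hne

lemma minN_insert_eq {q : ℕ} {Y : Finset ℕ} (h : ∀ y ∈ Y, q ≤ y) :
    minN (insert q Y) = q := by
  refine le_antisymm (minN_le (Finset.mem_insert_self _ _)) ?_
  have hm : minN (insert q Y) ∈ insert q Y := minN_mem ⟨q, Finset.mem_insert_self _ _⟩
  rcases Finset.mem_insert.mp hm with he | hmem
  · omega
  · exact h _ hmem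

lemma setBelow_subset {E F E' F' : Finset ℕ} (h : SetBelow E F) (hE : E' ⊆ E) (hF : F' ⊆ F) :
    SetBelow E' F' := fun x hx y hy => h x (hE hx) y (hF hy)

lemma thetaApart_subset {E F E' F' : Finset ℕ} (h : ThetaApart θ E F) (hE : E' ⊆ E)
    (hF : F' ⊆ F) (hF' : F'.Nonempty) : ThetaApart θ E' F' := by
  intro x hx
  obtain ⟨y, hy, hz⟩ := h x (lt_of_lt_of_le hx (maxN_mono hE))
  exact ⟨y, lt_of_lt_of_le hy (minN_mono hF hF'),
    fun z hz' => hz z (lt_of_lt_of_le hz' (maxN_mono hF))⟩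

lemma expSparse_subset {X Y : Finset ℕ} (h : ExpSparse X) (hYX : Y ⊆ X) : ExpSparse Y :=
  fun x hx y hy hxy => h x (hYX hx) y (hYX hy) hxy

lemma mulK_mono_left {L L' : Set (Finset ℕ)} (h : L ⊆ L') (k : ℕ) :
    MulK θ L k ⊆ MulK θ L' k := by
  rintro F ⟨Xs, h1, h2, h3⟩
  exact ⟨Xs, fun i => h (h1 i), h2, h3⟩

lemma mulK_mono_count {k k' : ℕ} (h : k ≤ k') (L : Set (Finset ℕ)) :
    MulK θ L k' ⊆ MulK θ L k := by
  rintro F ⟨Xs, h1, h2, h3⟩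
  refine ⟨fun i => Xs (Fin.castLE h i), fun i => h1 _, fun i => h2 _, fun i j hij => ?_⟩
  exact h3 _ _ (by exact hij)

lemma mulSeq_mono_left {L L' : Set (Finset ℕ)} (h : L ⊆ L') :
    ∀ σ : List ℕ, MulSeq θ L σ ⊆ MulSeq θ L' σ
  | [] => h
  | k :: τ => mulSeq_mono_left (mulK_mono_left h k) τ

lemma mulSeq_mono_seq : ∀ {σ τ : List ℕ}, List.Forall₂ (· ≤ ·) σ τ →
    ∀ L : Set (Finset ℕ), MulSeq θ L τ ⊆ MulSeq θ L σ := by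
  intro σ τ h
  induction h with
  | nil => exact fun L => subset_rfl
  | @cons a b σ' τ' hab _ ih =>
      intro L
      exact fun F hF => mulSeq_mono_left (mulK_mono_count hab L) σ' (ih (MulK θ L b) hF)

lemma mulSeq_append (L : Set (Finset ℕ)) :
    ∀ (σ τ : List ℕ), MulSeq θ L (σ ++ τ) = MulSeq θ (MulSeq θ L σ) τ := by
  intro σ
  induction σ generalizing L with
  | nil => intro τ; rfl
  | cons k σ' ih => intro τ; exact ih (MulK θ L k) τ

lemma largeStar_nonempty {n : ℕ} {X : Finset ℕ} (h : X ∈ LargeStar θ n) : X.Nonempty := by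
  cases n with
  | zero => exact h
  | succ n => exact h.1

lemma mulSeq_nonempty : ∀ (σ : List ℕ) (L : Set (Finset ℕ)),
    (∀ Z ∈ L, Z.Nonempty) → (∀ k ∈ σ, 0 < k) → ∀ F ∈ MulSeq θ L σ, F.Nonempty
  | [], L, hL, _, F, hF => hL F hF
  | k :: τ, L, hL, hσ, F, hF => by
    refine mulSeq_nonempty τ (MulK θ L k) ?_ (fun k' hk' => hσ k' (by simp [hk'])) F hF
    rintro Z ⟨Xs, h1, h2, _⟩
    have hk : 0 < k := hσ k (by simp)
    obtain ⟨x, hx⟩ := hL _ (h1 ⟨0, hk⟩)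
    exact ⟨x, h2 _ hx⟩

lemma empty_mem_mulK {L : Set (Finset ℕ)} (h : (∅ : Finset ℕ) ∈ L) (k : ℕ) :
    (∅ : Finset ℕ) ∈ MulK θ L k := by
  refine ⟨fun _ => ∅, fun _ => h, fun _ => subset_rfl, fun i j _ => ⟨fun x hx => by simp at hx, ?_⟩⟩
  intro x hx
  simp [maxN] at hx

lemma empty_mem_mulSeq {L : Set (Finset ℕ)} (h : (∅ : Finset ℕ) ∈ L) :
    ∀ σ : List ℕ, (∅ : Finset ℕ) ∈ MulSeq θ L σ
  | [] => h
  | k :: τ => empty_mem_mulSeq (empty_mem_mulK h k) τ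

lemma forall₂_replicate {a b : ℕ} (h : a ≤ b) (n : ℕ) :
    List.Forall₂ (· ≤ ·) (List.replicate n a) (List.replicate n b) := by
  induction n with
  | zero => simp
  | succ n ih => simpa [List.replicate_succ] using List.Forall₂.cons h ih

lemma sq_le_four_pow (n : ℕ) : n * n ≤ 4 ^ n := by
  induction n with
  | zero => simp
  | succ n ih =>
      have h1 : n < 4 ^ n := Nat.lt_pow_self (by norm_num)
      have : 4 ^ (n+1) = 4 * 4 ^ n := by ring
      nlinarith

end Aux
def MainP (θ : ℕ → ℕ → ℕ → Prop) (n : ℕ) : Prop :=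
  ∀ (ks : List ℕ) (a : ℕ) (X : Finset ℕ) (f : ℕ → ℕ),
    (∀ k ∈ ks, 0 < k) → 3 ≤ minN X → a ≤ minN X →
    X ∈ MulSeq θ (LargeStar θ (n + 1)) (a :: ks.map (fun k => a * k)) →
    ExpSparse X → (∀ x ∈ X, f x < a) →
    ∃ Y ⊆ X, Y ∈ MulSeq θ (LargeStar θ n) ks ∧ ∀ x ∈ Y, ∀ y ∈ Y, f x = f y

section Main

variable {θ : ℕ → ℕ → ℕ → Prop}

lemma extract {n : ℕ} (ih : MainP θ n) {X W : Finset ℕ} (hsp : ExpSparse X)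
    (h3 : 3 ≤ minN X) (hW : W ∈ LargeStar θ (n + 2)) (hWX : W ⊆ X)
    {a' b : ℕ} (ha'pos : 0 < a') (ha'X : a' ≤ minN X) (hb : 0 < b)
    (hab : a' * b ≤ minN W) (f' : ℕ → ℕ) (hf' : ∀ x ∈ W, f' x < a') :
    ∃ Y' ⊆ W.erase (minN W), Y'.Nonempty ∧
      Y' ∈ MulSeq θ (LargeStar θ n) (List.replicate (n + 1) b) ∧
      ∀ x ∈ Y', ∀ y ∈ Y', f' x = f' y := by
  have hWne : W.Nonempty := largeStar_nonempty hW
  rw [LargeStar] at hW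
  obtain ⟨-, hWer⟩ := hW
  set m := minN W with hm
  have ha'm : a' ≤ m := le_trans ha'X (minN_mono hWX hWne)
  rw [List.replicate_succ] at hWer
  have hmono : List.Forall₂ (· ≤ ·) (a' :: List.replicate (n + 1) (a' * b))
      (m :: List.replicate (n + 1) m) :=
    List.Forall₂.cons ha'm (forall₂_replicate hab (n + 1))
  have hX' : W.erase m ∈ MulSeq θ (LargeStar θ (n + 1))
      (a' :: List.replicate (n + 1) (a' * b)) := mulSeq_mono_seq hmono _ hWer
  have hpos : ∀ k ∈ (a' :: List.replicate (n + 1) (a' * b)), 0 < k := by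
    intro k hk
    rcases List.mem_cons.mp hk with rfl | hk'
    · exact ha'pos
    · rw [List.eq_of_mem_replicate hk']; exact Nat.mul_pos ha'pos hb
  have herne : (W.erase m).Nonempty :=
    mulSeq_nonempty _ _ (fun Z hZ => largeStar_nonempty hZ) hpos _ hX'
  have hersub : W.erase m ⊆ X := (Finset.erase_subset _ _).trans hWX
  have h3' : 3 ≤ minN (W.erase m) := le_trans h3 (minN_mono hersub herne)
  have ha'' : a' ≤ minN (W.erase m) := le_trans ha'X (minN_mono hersub herne)
  obtain ⟨Y', hY'sub, hY'mem, hY'hom⟩ :=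
    ih (List.replicate (n + 1) b) a' (W.erase m) f'
      (fun k hk => by rw [List.eq_of_mem_replicate hk]; exact hb) h3' ha''
      (by rw [List.map_replicate]; exact hX')
      (expSparse_subset hsp hersub)
      (fun x hx => hf' x (Finset.mem_of_mem_erase hx))
  have hY'ne : Y'.Nonempty :=
    mulSeq_nonempty _ _ (fun Z hZ => largeStar_nonempty hZ)
      (fun k hk => by rw [List.eq_of_mem_replicate hk]; exact hb) _ hY'mem
  exact ⟨Y', hY'sub, hY'ne, hY'mem, hY'hom⟩

lemma claimLemma (n : ℕ) (ih : MainP θ n) :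
    ∀ (j : ℕ) (X : Finset ℕ) (f : ℕ → ℕ) (W : Fin (j + 1) → Finset ℕ) (C : Finset ℕ),
      ExpSparse X → 3 ≤ minN X →
      (∀ i, W i ∈ LargeStar θ (n + 2)) → (∀ i, W i ⊆ X) →
      (∀ i k : Fin (j + 1), i < k → SetBelow (W i) (W k)) →
      C.card ≤ minN X → C.card ≤ j + 1 → (∀ i, ∀ x ∈ W i, f x ∈ C) →
      ∃ Y ⊆ X, Y ∈ LargeStar θ (n + 1) ∧ ∀ x ∈ Y, ∀ y ∈ Y, f x = f y := by
  intro j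
  induction j with
  | zero =>
    intro X f W C hsp h3 hmem hsub _ _ hC1 hfC
    have hW0 := hmem 0
    have hW0ne := largeStar_nonempty hW0
    set m := minN (W 0) with hm
    have hmW : m ∈ W 0 := minN_mem hW0ne
    have hmX : m ∈ X := hsub 0 hmW
    have hm3 : 3 ≤ m := le_trans h3 (minN_le hmX)
    obtain ⟨Y', hY'sub, hY'ne, hY'mem, -⟩ :=
      extract ih hsp h3 hW0 (hsub 0) (a' := 1) (b := m) one_pos (by omega)
        (by omega) (by omega) (fun _ => 0) (fun x _ => one_pos)
    have hgt : ∀ y ∈ Y', m < y := by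
      intro y hy
      have h1 := Finset.mem_of_mem_erase (hY'sub hy)
      have h2 := Finset.ne_of_mem_erase (hY'sub hy)
      exact lt_of_le_of_ne (minN_le h1) (Ne.symm h2)
    have hmnotin : m ∉ Y' := fun h => lt_irrefl m (hgt m h)
    have hsubW0 : insert m Y' ⊆ W 0 :=
      Finset.insert_subset hmW (hY'sub.trans (Finset.erase_subset _ _))
    refine ⟨insert m Y', hsubW0.trans (hsub 0), ?_, ?_⟩
    · rw [LargeStar]
      refine ⟨Finset.insert_nonempty _ _, ?_⟩
      rw [minN_insert_eq (fun y hy => le_of_lt (hgt y hy)), Finset.erase_insert hmnotin]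
      exact hY'mem
    · intro x hx y hy
      exact Finset.card_le_one.mp hC1 _ (hfC 0 x (hsubW0 hx)) _ (hfC 0 y (hsubW0 hy))
  | succ j ihj =>
    intro X f W C hsp h3 hmem hsub hbelow hCX hCcard hfC
    set top : Fin (j + 2) := Fin.last (j + 1) with htop
    set pre : Fin (j + 2) := (Fin.last j).castSucc with hpre
    have hpt : pre < top := by simp [hpre, htop, Fin.lt_def]
    have hWt := hmem top
    have hWtne := largeStar_nonempty hWt
    have hWpne := largeStar_nonempty (hmem pre)
    set b := maxN (W pre) with hb
    set m := minN (W top) with hm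
    have hbX : b ∈ X := hsub pre (maxN_mem hWpne)
    have hmX : m ∈ X := hsub top (minN_mem hWtne)
    have hbm : b < m := hbelow pre top hpt b (maxN_mem hWpne) m (minN_mem hWtne)
    have hbpos : 0 < b := by have := le_trans h3 (minN_le hbX); omega
    have ha'pos : 0 < C.card := Finset.card_pos.mpr ⟨f m, hfC top m (minN_mem hWtne)⟩
    have hXb : minN X ≤ b := minN_le hbX
    have hab : C.card * b ≤ m := by
      calc C.card * b ≤ b * b := Nat.mul_le_mul_right b (le_trans hCX hXb)
        _ ≤ 4 ^ b := sq_le_four_pow b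
        _ ≤ m := le_of_lt (hsp b hbX m hmX hbm)
    set l := C.sort (· ≤ ·) with hl
    have hf' : ∀ x ∈ W top, l.idxOf (f x) < C.card := by
      intro x hx
      have : f x ∈ l := (Finset.mem_sort _).mpr (hfC top x hx)
      simpa [hl] using List.idxOf_lt_length_iff.mpr this
    obtain ⟨Y', hY'sub, hY'ne, hY'mem, hY'hom⟩ :=
      extract ih hsp h3 hWt (hsub top) ha'pos hCX hbpos hab
        (fun x => l.idxOf (f x)) hf'
    obtain ⟨y₀, hy₀⟩ := hY'ne
    have hy₀W : y₀ ∈ W top := Finset.mem_of_mem_erase (hY'sub hy₀)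
    set c' := f y₀ with hc'
    have hc'C : c' ∈ C := hfC top y₀ hy₀W
    have homY' : ∀ x ∈ Y', f x = c' := by
      intro x hx
      have hxW : x ∈ W top := Finset.mem_of_mem_erase (hY'sub hx)
      have hind := hY'hom x hx y₀ hy₀
      exact (List.idxOf_inj ((Finset.mem_sort _).mpr (hfC top x hxW))).mp hind
    have hgt : ∀ y ∈ Y', m < y := by
      intro y hy
      have h1 := Finset.mem_of_mem_erase (hY'sub hy)
      have h2 := Finset.ne_of_mem_erase (hY'sub hy)
      exact lt_of_le_of_ne (minN_le h1) (Ne.symm h2)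
    by_cases hq : ∃ i : Fin (j + 1), ∃ q ∈ W i.castSucc, f q = c'
    · obtain ⟨i, q, hqW, hqc⟩ := hq
      have hqb : q ≤ b := by
        have hle : (i.castSucc : Fin (j + 2)) ≤ pre := by
          simp only [Fin.le_def, Fin.coe_castSucc, hpre, Fin.val_last]
          omega
        rcases lt_or_eq_of_le hle with hlt | heq
        · exact le_of_lt (hbelow _ pre hlt q hqW b (maxN_mem hWpne))
        · rw [heq] at hqW; exact le_maxN hqW
      have hqY' : ∀ y ∈ Y', q < y := fun y hy => by
        have := hgt y hy; omega
      have hqnotin : q ∉ Y' := fun h => lt_irrefl q (hqY' q h)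
      refine ⟨insert q Y', ?_, ?_, ?_⟩
      · exact Finset.insert_subset (hsub i.castSucc hqW)
          (hY'sub.trans ((Finset.erase_subset _ _).trans (hsub top)))
      · rw [LargeStar]
        refine ⟨Finset.insert_nonempty _ _, ?_⟩
        rw [minN_insert_eq (fun y hy => le_of_lt (hqY' y hy)), Finset.erase_insert hqnotin]
        exact mulSeq_mono_seq (forall₂_replicate hqb (n + 1)) _ hY'mem
      · have hval : ∀ x ∈ insert q Y', f x = c' := by
          intro x hx
          rcases Finset.mem_insert.mp hx with rfl | hx'
          · exact hqc
          · exact homY' x hx'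
        intro x hx y hy
        rw [hval x hx, hval y hy]
    · push_neg at hq
      exact ihj X f (fun i => W i.castSucc) (C.erase c') hsp h3
        (fun i => hmem _) (fun i => hsub _)
        (fun i k hik => hbelow _ _ (Fin.castSucc_lt_castSucc_iff.mpr hik))
        (le_trans (by rw [Finset.card_erase_of_mem hc'C]; omega) hCX)
        (by rw [Finset.card_erase_of_mem hc'C]; omega)
        (fun i x hx => Finset.mem_erase.mpr ⟨hq i x hx, hfC _ x hx⟩)

end Main
section Main2

variable {θ : ℕ → ℕ → ℕ → Prop}

lemma stepLemma (n : ℕ) (ks' : List ℕ) (k a : ℕ) (X : Finset ℕ) (f : ℕ → ℕ)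
    (ihs : ∀ (X : Finset ℕ) (f : ℕ → ℕ),
      (∀ k ∈ ks', 0 < k) → 3 ≤ minN X → a ≤ minN X →
      X ∈ MulSeq θ (LargeStar θ (n + 1)) (a :: ks'.map (fun k => a * k)) →
      ExpSparse X → (∀ x ∈ X, f x < a) →
      ∃ Y ⊆ X, Y ∈ MulSeq θ (LargeStar θ n) ks' ∧ ∀ x ∈ Y, ∀ y ∈ Y, f x = f y)
    (h0 : ∀ k₀ ∈ ks' ++ [k], 0 < k₀) (h3 : 3 ≤ minN X) (ha : a ≤ minN X)
    (hX : X ∈ MulSeq θ (LargeStar θ (n + 1)) (a :: (ks' ++ [k]).map (fun k => a * k)))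
    (hsp : ExpSparse X) (hf : ∀ x ∈ X, f x < a) :
    ∃ Y ⊆ X, Y ∈ MulSeq θ (LargeStar θ n) (ks' ++ [k]) ∧ ∀ x ∈ Y, ∀ y ∈ Y, f x = f y := by
  have hXne : X.Nonempty := nonempty_of_three_le_minN h3
  rcases Nat.eq_zero_or_pos a with rfl | hapos
  · exact absurd (hf _ (minN_mem hXne)) (by omega)
  have hkpos : 0 < k := h0 k (by simp)
  have hXr : X ∈ MulK θ (MulSeq θ (LargeStar θ (n + 1))
      (a :: ks'.map (fun k => a * k))) (a * k) := by
    have he : (a :: (ks' ++ [k]).map (fun k => a * k))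
        = (a :: ks'.map (fun k => a * k)) ++ [a * k] := by simp
    rw [he, mulSeq_append] at hX
    exact hX
  obtain ⟨B, hBmem, hBsub, hBrel⟩ := hXr
  have hBne : ∀ i, (B i).Nonempty := by
    intro i
    refine mulSeq_nonempty _ _ (fun W hW => largeStar_nonempty hW) ?_ _ (hBmem i)
    intro k' hk'
    rcases List.mem_cons.mp hk' with rfl | hk''
    · exact hapos
    · obtain ⟨k₀, hk₀, rfl⟩ := List.mem_map.mp hk''
      exact Nat.mul_pos hapos (h0 k₀ (by simp [hk₀]))
  choose Y0 hY0sub hY0mem hY0hom using fun i : Fin (a * k) =>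
    ihs (B i) f (fun k' hk' => h0 k' (by simp [hk']))
      (le_trans h3 (minN_mono (hBsub i) (hBne i)))
      (le_trans ha (minN_mono (hBsub i) (hBne i))) (hBmem i)
      (expSparse_subset hsp (hBsub i)) (fun x hx => hf x (hBsub i hx))
  have hY0ne : ∀ i, (Y0 i).Nonempty := fun i =>
    mulSeq_nonempty _ _ (fun W hW => largeStar_nonempty hW)
      (fun k' hk' => h0 k' (by simp [hk'])) _ (hY0mem i)
  set c := fun i => f (minN (Y0 i)) with hc
  have hcmem : ∀ i ∈ (Finset.univ : Finset (Fin (a * k))), c i ∈ Finset.range a := by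
    intro i _
    exact Finset.mem_range.mpr (hf _ (hBsub i (hY0sub i (minN_mem (hY0ne i)))))
  have hcard : (Finset.range a).card * (k - 1) < (Finset.univ : Finset (Fin (a * k))).card := by
    have h1 : k - 1 < k := by omega
    simpa [Finset.card_range] using mul_lt_mul_of_pos_left h1 hapos
  obtain ⟨v, hv, hfib⟩ := Finset.exists_lt_card_fiber_of_mul_lt_card_of_maps_to hcmem hcard
  obtain ⟨T, hTsub, hTcard⟩ := Finset.exists_subset_card_eq (show
    k ≤ (Finset.univ.filter fun i => c i = v).card by omega)
  set g := fun i : Fin k => ((T.orderIsoOfFin hTcard i : {x // x ∈ T}) : Fin (a * k)) with hg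
  have hgmono : ∀ i i' : Fin k, i < i' → g i < g i' := by
    intro i i' hii
    exact Subtype.coe_lt_coe.mpr ((T.orderIsoOfFin hTcard).lt_iff_lt.mpr hii)
  have hgv : ∀ i : Fin k, c (g i) = v := by
    intro i
    have hmem : g i ∈ Finset.univ.filter (fun i => c i = v) :=
      hTsub (T.orderIsoOfFin hTcard i).2
    exact (Finset.mem_filter.mp hmem).2
  refine ⟨Finset.univ.biUnion (fun i : Fin k => Y0 (g i)), ?_, ?_, ?_⟩
  · intro x hx
    obtain ⟨i, -, hxi⟩ := Finset.mem_biUnion.mp hx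
    exact hBsub (g i) (hY0sub (g i) hxi)
  · rw [mulSeq_append]
    show _ ∈ MulK θ (MulSeq θ (LargeStar θ n) ks') k
    refine ⟨fun i => Y0 (g i), fun i => hY0mem _,
      fun i => Finset.subset_biUnion_of_mem (fun i => Y0 (g i)) (Finset.mem_univ i), ?_⟩
    intro i i' hii
    have hgl := hgmono i i' hii
    exact ⟨setBelow_subset (hBrel _ _ hgl).1 (hY0sub _) (hY0sub _),
      thetaApart_subset (hBrel _ _ hgl).2 (hY0sub _) (hY0sub _) (hY0ne _)⟩
  · intro x hx y hy
    obtain ⟨i, -, hxi⟩ := Finset.mem_biUnion.mp hx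
    obtain ⟨i', -, hyi⟩ := Finset.mem_biUnion.mp hy
    have hx' : f x = c (g i) := hY0hom (g i) x hxi _ (minN_mem (hY0ne _))
    have hy' : f y = c (g i') := hY0hom (g i') y hyi _ (minN_mem (hY0ne _))
    rw [hx', hy', hgv i, hgv i']

lemma mainLemma (n : ℕ) : MainP θ n := by
  induction n with
  | zero =>
    intro ks
    induction ks using List.reverseRecOn with
    | nil =>
      intro a X f _ h3 _ _ _ _
      have hXne := nonempty_of_three_le_minN h3
      refine ⟨{minN X}, Finset.singleton_subset_iff.mpr (minN_mem hXne), ?_, by simp⟩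
      show ({minN X} : Finset ℕ) ∈ LargeStar θ 0
      rw [LargeStar]
      exact Finset.singleton_nonempty _
    | append_singleton ks' k ihs =>
      intro a X f h0 h3 ha hX hsp hf
      exact stepLemma 0 ks' k a X f (fun X f => ihs a X f) h0 h3 ha hX hsp hf
  | succ n ihn =>
    intro ks
    induction ks using List.reverseRecOn with
    | nil =>
      intro a X f _ h3 ha hX hsp hf
      have hXne := nonempty_of_three_le_minN h3
      rcases Nat.eq_zero_or_pos a with rfl | hapos
      · exact absurd (hf _ (minN_mem hXne)) (by omega)
      obtain ⟨j, rfl⟩ : ∃ j, a = j + 1 := ⟨a - 1, by omega⟩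
      have hXK : X ∈ MulK θ (LargeStar θ (n + 2)) (j + 1) := hX
      obtain ⟨Z, hZmem, hZsub, hZrel⟩ := hXK
      obtain ⟨Y, hYX, hYmem, hYhom⟩ :=
        claimLemma n ihn j X f Z (Finset.range (j + 1)) hsp h3 hZmem hZsub
          (fun i k' h => (hZrel i k' h).1) (by simpa using ha) (by simp)
          (fun i x hx => Finset.mem_range.mpr (hf x (hZsub i hx)))
      exact ⟨Y, hYX, hYmem, hYhom⟩
    | append_singleton ks' k ihs =>
      intro a X f h0 h3 ha hX hsp hf
      exact stepLemma (n + 1) ks' k a X f (fun X f => ihs a X f) h0 h3 ha hX hsp hf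

end Main2
/-- pigeonhole principle, general form. -/
theorem stmt_9 (θ : ℕ → ℕ → ℕ → Prop) (n a : ℕ) (ks : List ℕ) (X : Finset ℕ)
    (h3 : 3 ≤ minN X) (ha : a ≤ minN X)
    (hX : X ∈ MulSeq θ (LargeStar θ (n + 1)) (a :: ks.map (fun k => a * k)))
    (hsp : ExpSparse X)
    (f : ℕ → ℕ) (hf : ∀ x ∈ X, f x < a) :
    ∃ Y ⊆ X, Y ∈ MulSeq θ (LargeStar θ n) ks ∧ ∀ x ∈ Y, ∀ y ∈ Y, f x = f y := by
  by_cases h0 : ∀ k ∈ ks, 0 < k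
  · exact mainLemma n ks a X f h0 h3 ha hX hsp hf
  · push_neg at h0
    obtain ⟨k, hk, hk0⟩ := h0
    have hk0' : k = 0 := by omega
    rw [hk0'] at hk
    obtain ⟨s, t, rfl⟩ := List.append_of_mem hk
    refine ⟨∅, Finset.empty_subset _, ?_, by simp⟩
    rw [mulSeq_append]
    show (∅ : Finset ℕ) ∈ MulSeq θ (MulK θ (MulSeq θ (LargeStar θ n) s) 0) t
    apply empty_mem_mulSeq
    exact ⟨Fin.elim0, fun i => i.elim0, fun i => i.elim0, fun i => i.elim0⟩
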